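/- Let k ∈ [n-1] and let u ⋖ₖ v ⋖₁ w be covers in Sₙ, with v = w·t_{1,a} and u = v·t_{b,c} for b ≤ k < c, such that 1, a, b, c are four distinct indices. Then u ⋖₁ w·t_{b,c} ⋖ₖ w; that is, w·t_{b,c} is a Bruhat cocover of w via a transposition with both data positions straddling k, and u = (w·t_{b,c})·t_{1,a} is a Bruhat cocover of w·t_{b,c} via a transposition involving position 1. -/

import Mathlib

/-- Number of inversions of a permutation of `Fin n`. -/
def invCount {n : ℕ} (w : Equiv.Perm (Fin n)) : ℕ :=
  (Finset.univ.filter (fun p : Fin n × Fin n => p.1 < p.2 ∧ w p.2 < w p.1)).card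

/-- `w ∈ Sₙ^{k↘}` (1-indexed: `w(k+1) > ⋯ > w(n)`); positions are 0-indexed here. -/
def DescFrom (n k : ℕ) (w : Equiv.Perm (Fin n)) : Prop :=
  ∀ p q : Fin n, k ≤ (p : ℕ) → p < q → w q < w p

/-- `u ⋖ₖ w` : cover in the `k`-Bruhat order (1-indexed `k`; positions 0-indexed,
so `i ≤ k < j` becomes `↑i < k ≤ ↑j`). -/
def kCover (n k : ℕ) (u w : Equiv.Perm (Fin n)) : Prop :=
  ∃ i j : Fin n, (i : ℕ) < k ∧ k ≤ (j : ℕ) ∧ u = w * Equiv.swap i j ∧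
    invCount w = invCount u + 1

/-- An increasing `k`-chain `v 0 ⋖ₖ v 1 ⋖ₖ ⋯ ⋖ₖ v d`, with
`v m = v (m+1) * swap (a m) (b m)` and strictly increasing smaller swapped values
`v m (a m)`. -/
def IsIncKChain (n k : ℕ) {d : ℕ} (v : Fin (d + 1) → Equiv.Perm (Fin n))
    (a b : Fin d → Fin n) : Prop :=
  (∀ m : Fin d, (a m : ℕ) < k ∧ k ≤ (b m : ℕ) ∧
      v m.castSucc = v m.succ * Equiv.swap (a m) (b m) ∧
      invCount (v m.succ) = invCount (v m.castSucc) + 1) ∧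
  ∀ m m' : Fin d, m < m' → v m.castSucc (a m) < v m'.castSucc (a m')

/-- There is an increasing `k`-chain of length `d` (number of covers) from `u` to `w`. -/
def ExIncKChainLen (n k d : ℕ) (u w : Equiv.Perm (Fin n)) : Prop :=
  ∃ (v : Fin (d + 1) → Equiv.Perm (Fin n)) (a b : Fin d → Fin n),
    IsIncKChain n k v a b ∧ v 0 = u ∧ v (Fin.last d) = w

open Finset Equiv

lemma invCount_eq_sum {n : ℕ} (w : Equiv.Perm (Fin n)) :
    (invCount w : ℤ) =
      ∑ p : Fin n × Fin n, (if p.1 < p.2 ∧ w p.2 < w p.1 then (1:ℤ) else 0) := by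
  rw [invCount, Finset.card_filter]; push_cast; rfl

lemma invCount_mul_swap_sum {n : ℕ} (w : Equiv.Perm (Fin n)) (i j : Fin n) :
    (invCount (w * Equiv.swap i j) : ℤ) =
      ∑ p : Fin n × Fin n,
        (if Equiv.swap i j p.1 < Equiv.swap i j p.2 ∧ w p.2 < w p.1 then (1:ℤ) else 0) := by
  rw [invCount_eq_sum]
  apply Fintype.sum_equiv (Equiv.prodCongr (Equiv.swap i j) (Equiv.swap i j))
  intro p
  simp [Equiv.Perm.mul_apply, Equiv.swap_apply_self]
  exact if_congr Iff.rfl rfl rfl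

set_option maxHeartbeats 2000000 in
lemma keyA {n : ℕ} (w : Equiv.Perm (Fin n)) (i j : Fin n) (hij : i < j) (hw : w j < w i) :
    (invCount w : ℤ) = invCount (w * Equiv.swap i j) + 1 +
      2 * ∑ m : Fin n, (if i < m ∧ m < j ∧ w j < w m ∧ w m < w i then (1:ℤ) else 0) := by
  set h : Fin n → Fin n → ℤ := fun p q =>
    (if p < q ∧ w q < w p then (1:ℤ) else 0)
      - (if Equiv.swap i j p < Equiv.swap i j q ∧ w q < w p then 1 else 0) with hh
  have hij' : (i:ℕ) < (j:ℕ) := hij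
  have hw' : ((w j):ℕ) < ((w i):ℕ) := hw
  have e1 : Equiv.swap i j i = j := Equiv.swap_apply_left i j
  have e2 : Equiv.swap i j j = i := Equiv.swap_apply_right i j
  have hdiff : (invCount w : ℤ) - invCount (w * Equiv.swap i j) = ∑ p : Fin n, ∑ q : Fin n, h p q := by
    rw [invCount_eq_sum, invCount_mul_swap_sum, ← Finset.sum_sub_distrib,
      Fintype.sum_prod_type]
  have hzero : ∀ p q : Fin n, p ≠ i → p ≠ j → q ≠ i → q ≠ j → h p q = 0 := by
    intro p q hpi hpj hqi hqj
    simp [hh, Equiv.swap_apply_of_ne_of_ne hpi hpj, Equiv.swap_apply_of_ne_of_ne hqi hqj]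
  have memrest : ∀ m : Fin n, m ∈ (univ \ {i, j} : Finset (Fin n)) → m ≠ i ∧ m ≠ j := by
    intro m hm
    simp only [Finset.mem_sdiff, Finset.mem_insert, Finset.mem_singleton] at hm
    exact ⟨fun h' => hm.2 (Or.inl h'), fun h' => hm.2 (Or.inr h')⟩
  have inner : ∀ p : Fin n, ∑ q : Fin n, h p q
      = (∑ q ∈ univ \ {i, j}, h p q) + (h p i + h p j) := by
    intro p
    rw [← Finset.sum_sdiff (Finset.subset_univ {i, j}), Finset.sum_pair hij.ne]
  have outer : ∑ p : Fin n, ∑ q : Fin n, h p q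
      = (∑ m ∈ univ \ ({i, j} : Finset (Fin n)), (h i m + h j m + h m i + h m j))
        + (h i i + h i j + h j i + h j j) := by
    calc ∑ p : Fin n, ∑ q : Fin n, h p q
        = ∑ p : Fin n, ((∑ q ∈ univ \ {i, j}, h p q) + (h p i + h p j)) :=
          Finset.sum_congr rfl fun p _ => inner p
      _ = (∑ p : Fin n, ∑ q ∈ univ \ {i, j}, h p q) + ∑ p : Fin n, (h p i + h p j) :=
          Finset.sum_add_distrib
      _ = ((∑ p ∈ univ \ {i, j}, ∑ q ∈ univ \ {i, j}, h p q)
            + (∑ q ∈ univ \ {i, j}, h i q + ∑ q ∈ univ \ {i, j}, h j q))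
          + ((∑ p ∈ univ \ {i, j}, (h p i + h p j))
            + ((h i i + h i j) + (h j i + h j j))) := by
          rw [← Finset.sum_sdiff (Finset.subset_univ ({i, j} : Finset (Fin n)))
              (f := fun p => ∑ q ∈ univ \ {i, j}, h p q),
            ← Finset.sum_sdiff (Finset.subset_univ ({i, j} : Finset (Fin n)))
              (f := fun p => h p i + h p j),
            Finset.sum_pair hij.ne, Finset.sum_pair hij.ne]
      _ = _ := by
          have z1 : ∑ p ∈ univ \ ({i, j} : Finset (Fin n)), ∑ q ∈ univ \ {i, j}, h p q = 0 := by
            apply Finset.sum_eq_zero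
            intro p hp
            apply Finset.sum_eq_zero
            intro q hq
            exact hzero p q (memrest p hp).1 (memrest p hp).2 (memrest q hq).1 (memrest q hq).2
          have c0 : ∑ m ∈ univ \ ({i, j} : Finset (Fin n)), (h i m + h j m + h m i + h m j)
              = ∑ m ∈ univ \ ({i, j} : Finset (Fin n)), ((h i m + h j m) + (h m i + h m j)) :=
            Finset.sum_congr rfl fun x _ => by ring
          rw [z1, c0]
          simp only [Finset.sum_add_distrib, hh]
          ring
  have hval : ∀ m : Fin n, m ≠ i → m ≠ j →
      h i m + h j m + h m i + h m j
        = 2 * (if i < m ∧ m < j ∧ w j < w m ∧ w m < w i then (1:ℤ) else 0) := by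
    intro m hmi hmj
    have e3 : Equiv.swap i j m = m := Equiv.swap_apply_of_ne_of_ne hmi hmj
    have d1 : ((w m):ℕ) ≠ ((w i):ℕ) := by
      intro h'; exact hmi (w.injective (Fin.val_injective h'))
    have d2 : ((w m):ℕ) ≠ ((w j):ℕ) := by
      intro h'; exact hmj (w.injective (Fin.val_injective h'))
    have d3 : (m:ℕ) ≠ (i:ℕ) := fun h' => hmi (Fin.val_injective h')
    have d4 : (m:ℕ) ≠ (j:ℕ) := fun h' => hmj (Fin.val_injective h')
    simp only [hh, e1, e2, e3, Fin.lt_def]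
    split_ifs <;> omega
  have hcorner : h i i + h i j + h j i + h j j = 1 := by
    simp only [hh, e1, e2, Fin.lt_def]
    split_ifs <;> omega
  have hext : ∑ m ∈ univ \ ({i, j} : Finset (Fin n)),
        (if i < m ∧ m < j ∧ w j < w m ∧ w m < w i then (1:ℤ) else 0)
      = ∑ m : Fin n, (if i < m ∧ m < j ∧ w j < w m ∧ w m < w i then (1:ℤ) else 0) := by
    apply Finset.sum_subset (Finset.sdiff_subset)
    intro x _ hx
    simp only [Finset.mem_sdiff, Finset.mem_univ, true_and, not_not] at hx
    simp only [Finset.mem_insert, Finset.mem_singleton] at hx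
    rcases hx with rfl | rfl
    · simp [lt_irrefl]
    · simp [lt_irrefl]
  have key : (invCount w : ℤ) - invCount (w * Equiv.swap i j)
      = 2 * (∑ m : Fin n, (if i < m ∧ m < j ∧ w j < w m ∧ w m < w i then (1:ℤ) else 0)) + 1 := by
    rw [hdiff, outer, hcorner,
      Finset.sum_congr rfl (fun m hm => hval m (memrest m hm).1 (memrest m hm).2),
      ← Finset.mul_sum, hext]
  linarith

lemma cover_iff {n : ℕ} (w : Equiv.Perm (Fin n)) (i j : Fin n) (hij : i < j) :
    invCount w = invCount (w * Equiv.swap i j) + 1 ↔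
      (w j < w i ∧ ∀ m : Fin n, i < m → m < j → ¬(w j < w m ∧ w m < w i)) := by
  constructor
  · intro hcov
    have hne : w j ≠ w i := fun h' => hij.ne (w.injective h').symm
    rcases hne.lt_or_gt with hw | hw
    · refine ⟨hw, ?_⟩
      have hf := keyA w i j hij hw
      have hz : ∑ m : Fin n, (if i < m ∧ m < j ∧ w j < w m ∧ w m < w i then (1:ℤ) else 0) = 0 := by
        have : (invCount w : ℤ) = invCount (w * Equiv.swap i j) + 1 := by exact_mod_cast hcov
        linarith
      intro m him hmj hmid
      have hterm := Finset.sum_eq_zero_iff_of_nonneg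
        (fun x (_ : x ∈ (univ : Finset (Fin n))) => by positivity) |>.mp hz m (Finset.mem_univ m)
      rw [if_pos ⟨him, hmj, hmid.1, hmid.2⟩] at hterm
      exact one_ne_zero hterm
    · exfalso
      have hw' : (w * Equiv.swap i j) j < (w * Equiv.swap i j) i := by
        simp only [Equiv.Perm.mul_apply, Equiv.swap_apply_left, Equiv.swap_apply_right]
        exact hw
      have hf := keyA (w * Equiv.swap i j) i j hij hw'
      rw [mul_assoc, Equiv.swap_mul_self, mul_one] at hf
      have hnn : (0:ℤ) ≤ ∑ m : Fin n,
          (if i < m ∧ m < j ∧ (w * Equiv.swap i j) j < (w * Equiv.swap i j) m ∧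
            (w * Equiv.swap i j) m < (w * Equiv.swap i j) i then (1:ℤ) else 0) :=
        Finset.sum_nonneg fun x _ => by positivity
      have : (invCount w : ℤ) = invCount (w * Equiv.swap i j) + 1 := by exact_mod_cast hcov
      linarith
  · rintro ⟨hw, hnb⟩
    have hf := keyA w i j hij hw
    have hz : ∑ m : Fin n, (if i < m ∧ m < j ∧ w j < w m ∧ w m < w i then (1:ℤ) else 0) = 0 :=
      Finset.sum_eq_zero fun m _ =>
        if_neg (fun hc => hnb m hc.1 hc.2.1 ⟨hc.2.2.1, hc.2.2.2⟩)
    rw [hz] at hf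
    have : (invCount w : ℤ) = invCount (w * Equiv.swap i j) + 1 := by linarith
    exact_mod_cast this

lemma swap_comm_disj {n : ℕ} (i j b c : Fin n) (h1 : i ≠ b) (h2 : i ≠ c) (h3 : j ≠ b)
    (h4 : j ≠ c) :
    Equiv.swap i j * Equiv.swap b c = Equiv.swap b c * Equiv.swap i j := by
  ext x
  simp only [Equiv.Perm.mul_apply, Equiv.swap_apply_def]
  split_ifs <;> simp_all

theorem stmt14 (n k : ℕ) (hn : 0 < n) (hk1 : 1 ≤ k) (hk2 : k ≤ n - 1)
    (w : Equiv.Perm (Fin n)) (a b c : Fin n)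
    (hbk : (b : ℕ) < k) (hkc : k ≤ (c : ℕ))
    (ha0 : (a : ℕ) ≠ 0) (hb0 : (b : ℕ) ≠ 0) (hc0 : (c : ℕ) ≠ 0)
    (hab : a ≠ b) (hac : a ≠ c) (hbc : b ≠ c)
    (hcov1 : invCount w = invCount (w * Equiv.swap ⟨0, hn⟩ a) + 1)
    (hcov2 : invCount (w * Equiv.swap ⟨0, hn⟩ a)
      = invCount (w * Equiv.swap ⟨0, hn⟩ a * Equiv.swap b c) + 1) :
    invCount w = invCount (w * Equiv.swap b c) + 1 ∧
    invCount (w * Equiv.swap b c)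
      = invCount (w * Equiv.swap b c * Equiv.swap ⟨0, hn⟩ a) + 1 ∧
    w * Equiv.swap ⟨0, hn⟩ a * Equiv.swap b c
      = w * Equiv.swap b c * Equiv.swap ⟨0, hn⟩ a := by
  set z : Fin n := ⟨0, hn⟩ with hz
  have hza : z < a := by rw [Fin.lt_def]; exact Nat.pos_of_ne_zero ha0
  have hzb : z < b := by rw [Fin.lt_def]; exact Nat.pos_of_ne_zero hb0
  have hzc : z < c := by rw [Fin.lt_def]; exact Nat.pos_of_ne_zero hc0
  have hbcF : b < c := by rw [Fin.lt_def]; omega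
  have hzb' : z ≠ b := hzb.ne
  have hzc' : z ≠ c := hzc.ne
  have hbz : b ≠ z := hzb.ne'
  have hcz : c ≠ z := hzc.ne'
  have hba : b ≠ a := hab.symm
  have hca : c ≠ a := hac.symm
  -- extraction from hcov1
  obtain ⟨hwa, H1⟩ := (cover_iff w z a hza).mp hcov1
  -- values of v := w * swap z a
  have va : (w * Equiv.swap z a) a = w z := by
    rw [Equiv.Perm.mul_apply, Equiv.swap_apply_right]
  have vb : (w * Equiv.swap z a) b = w b := by
    rw [Equiv.Perm.mul_apply, Equiv.swap_apply_of_ne_of_ne hbz hba]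
  have vc : (w * Equiv.swap z a) c = w c := by
    rw [Equiv.Perm.mul_apply, Equiv.swap_apply_of_ne_of_ne hcz hca]
  obtain ⟨h2v, H2⟩ := (cover_iff (w * Equiv.swap z a) b c hbcF).mp hcov2
  rw [vb, vc] at h2v
  -- h2v : w c < w b
  have hwbz : ∀ {x : Fin n}, x ≠ z → w x ≠ w z := fun hx h' => hx (w.injective h')
  refine ⟨?_, ?_, ?_⟩
  · -- invCount w = invCount (w * swap b c) + 1
    refine (cover_iff w b c hbcF).mpr ⟨h2v, ?_⟩
    rintro m hbm hmc ⟨hcm, hmb⟩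
    by_cases hma : m = a
    · subst hma
      have hH2 := H2 m hbm hmc
      rw [va, vb, vc] at hH2
      have h5 : w c < w z := lt_trans hcm hwa
      have h6 : w b < w z := by
        rcases (hwbz hbz).lt_or_gt with h | h
        · exact h
        · exact absurd ⟨h5, h⟩ hH2
      exact H1 b hzb hbm ⟨hmb, h6⟩
    · have hmz : m ≠ z := (lt_trans hzb hbm).ne'
      have vm : (w * Equiv.swap z a) m = w m := by
        rw [Equiv.Perm.mul_apply, Equiv.swap_apply_of_ne_of_ne hmz hma]
      exact H2 m hbm hmc (by rw [vm, vb, vc]; exact ⟨hcm, hmb⟩)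
  · -- invCount (w * swap b c) = invCount (w * swap b c * swap z a) + 1
    have xa : (w * Equiv.swap b c) a = w a := by
      rw [Equiv.Perm.mul_apply, Equiv.swap_apply_of_ne_of_ne hab hac]
    have xz : (w * Equiv.swap b c) z = w z := by
      rw [Equiv.Perm.mul_apply, Equiv.swap_apply_of_ne_of_ne hzb' hzc']
    refine (cover_iff (w * Equiv.swap b c) z a hza).mpr ⟨by rw [xa, xz]; exact hwa, ?_⟩
    rintro m hzm hma ⟨h1', h2'⟩
    rw [xa] at h1'
    rw [xz] at h2'
    by_cases hmb : m = b
    · rw [hmb, Equiv.Perm.mul_apply, Equiv.swap_apply_left] at h1' h2'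
      rw [hmb] at hzm hma
      -- h1' : w a < w c, h2' : w c < w z ; positions : z < m = b < a
      rcases hac.lt_or_gt with hacF | hcaF
      · -- a < c ; then b < a < c
        have hH2 := H2 a hma hacF
        rw [va, vb, vc] at hH2
        have h6 : w b < w z := by
          rcases (hwbz hbz).lt_or_gt with h | h
          · exact h
          · exact absurd ⟨h2', h⟩ hH2
        exact H1 b hzb hma ⟨lt_trans h1' h2v, h6⟩
      · -- c < a
        exact H1 c hzc hcaF ⟨h1', h2'⟩
    · by_cases hmc : m = c
      · rw [hmc, Equiv.Perm.mul_apply, Equiv.swap_apply_right] at h1' h2'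
        rw [hmc] at hzm hma
        -- h1' : w a < w b, h2' : w b < w z ; positions : b < c = m < a
        exact H1 b hzb (lt_trans hbcF hma) ⟨h1', h2'⟩
      · rw [Equiv.Perm.mul_apply, Equiv.swap_apply_of_ne_of_ne hmb hmc] at h1' h2'
        exact H1 m hzm hma ⟨h1', h2'⟩
  · rw [mul_assoc, mul_assoc, swap_comm_disj z a b c hzb' hzc' hba.symm hca.symm]
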